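/- Let d_1, …, d_n be positive integers and let m_1 ≥ m_2 ≥ … ≥ m_n be their decreasing rearrangement. There exists a simple graph (no loops or multiple edges) on n vertices whose vertex degrees are exactly d_1, …, d_n if and only if Σ_{i=1}^n d_i is even and for every j with 1 ≤ j ≤ n one has Σ_{i=1}^j m_i ≤ j(j−1) + Σ_{i=j+1}^n min(j, m_i). -/

import Mathlib

set_option linter.all false


/-- A finite sequence `d 0, …, d (n-1)` of integers is *graphical* if there exists a simple
graph on `n` vertices whose vertex degrees are exactly `d 0, …, d (n-1)`. -/
def Graphical (n : ℕ) (d : ℕ → ℕ) : Prop :=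
  ∃ G : SimpleGraph (Fin n), ∀ v : Fin n, (G.neighborSet v).ncard = d (v : ℕ)

/-- The Erdős–Gallai condition for the (nonincreasing) sequence `m 0, …, m (n-1)`
(0-indexed version of `m_1 ≥ … ≥ m_n`):
`∑_{i=1}^j m_i ≤ j(j-1) + ∑_{i=j+1}^n min(j, m_i)` for all `1 ≤ j ≤ n`. -/
def ErdosGallaiCond (n : ℕ) (m : ℕ → ℕ) : Prop :=
  ∀ j, 1 ≤ j → j ≤ n →
    ∑ i ∈ Finset.range j, m i ≤ j * (j - 1) + ∑ i ∈ Finset.Ico j n, min j (m i)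

open Finset

private lemma filter_range_lt (n j : ℕ) : (range n).filter (fun i => i < j) = range (min j n) := by
  ext i; simp [Finset.mem_filter, Finset.mem_range]; omega

private lemma filter_range_ge (n j : ℕ) : (range n).filter (fun i => ¬ i < j) = Ico j n := by
  ext i; simp [Finset.mem_filter, Finset.mem_range, Finset.mem_Ico]; omega

private lemma sum_fin_filter_lt {n j : ℕ} (hj : j ≤ n) (F : ℕ → ℕ) :
    ∑ v ∈ univ.filter (fun v : Fin n => v.val < j), F v.val = ∑ i ∈ range j, F i := by
  rw [Finset.sum_filter, Fin.sum_univ_eq_sum_range (fun i => if i < j then F i else 0) n,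
    ← Finset.sum_filter, filter_range_lt, Nat.min_eq_left hj]

private lemma sum_fin_filter_ge {n j : ℕ} (F : ℕ → ℕ) :
    ∑ v ∈ univ.filter (fun v : Fin n => ¬ v.val < j), F v.val = ∑ i ∈ Ico j n, F i := by
  rw [Finset.sum_filter, Fin.sum_univ_eq_sum_range (fun i => if ¬ i < j then F i else 0) n,
    ← Finset.sum_filter, filter_range_ge]

private lemma ncard_nbhd {n : ℕ} (G : SimpleGraph (Fin n)) [DecidableRel G.Adj] (v : Fin n) :
    (G.neighborSet v).ncard = G.degree v := by
  rw [SimpleGraph.degree, ← Set.ncard_coe_finset]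
  congr 1; simp [SimpleGraph.neighborFinset]

private lemma graphical_iff_degree {n : ℕ} (d : ℕ → ℕ) :
    Graphical n d ↔ ∃ (G : SimpleGraph (Fin n)) (_ : DecidableRel G.Adj),
      ∀ v : Fin n, G.degree v = d v.val := by
  constructor
  · rintro ⟨G, hG⟩
    classical
    exact ⟨G, inferInstance, fun v => by rw [← ncard_nbhd, hG]⟩
  · rintro ⟨G, inst, hG⟩
    exact ⟨G, fun v => by rw [ncard_nbhd G v, hG]⟩

private lemma graphical_of_perm {n : ℕ} (d m : ℕ → ℕ) (σ : Equiv.Perm (Fin n))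
    (hm : ∀ i : Fin n, m i.val = d ((σ i : Fin n) : ℕ)) (h : Graphical n d) : Graphical n m := by
  obtain ⟨G, hG⟩ := h
  refine ⟨G.comap σ, fun v => ?_⟩
  have h1 : (G.comap σ).neighborSet v = ⇑σ.symm '' (G.neighborSet (σ v)) := by
    ext w
    simp only [SimpleGraph.neighborSet, SimpleGraph.comap_adj, Set.mem_setOf_eq, Set.mem_image]
    constructor
    · intro hw; exact ⟨σ w, hw, by simp⟩
    · rintro ⟨x, hx, rfl⟩; simpa using hx
  rw [h1, Set.ncard_image_of_injective _ σ.symm.injective, hm]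
  exact hG (σ v)

private lemma necessity {n : ℕ} (m : ℕ → ℕ) (h : Graphical n m) :
    Even (∑ i ∈ range n, m i) ∧ ErdosGallaiCond n m := by
  obtain ⟨G, inst, hG⟩ := (graphical_iff_degree m).1 h
  have hsum : ∑ i ∈ range n, m i = ∑ v : Fin n, G.degree v := by
    rw [← Fin.sum_univ_eq_sum_range m n]; exact Finset.sum_congr rfl (fun v _ => (hG v).symm)
  constructor
  · rw [hsum, SimpleGraph.sum_degrees_eq_twice_card_edges]; exact even_two_mul _
  intro j hj1 hjn
  set S : Finset (Fin n) := univ.filter (fun v => v.val < j) with hS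
  have hcardS : S.card = j := by
    have := sum_fin_filter_lt (n := n) hjn (fun _ => 1)
    simpa using this
  -- LHS
  have hLHS : ∑ i ∈ range j, m i = ∑ v ∈ S, G.degree v := by
    rw [← sum_fin_filter_lt hjn m]
    exact Finset.sum_congr rfl (fun v _ => (hG v).symm)
  -- split degrees
  have hsplit : ∀ v : Fin n, G.degree v =
      ((G.neighborFinset v).filter (fun w => w.val < j)).card +
      ((G.neighborFinset v).filter (fun w => ¬ w.val < j)).card := by
    intro v
    rw [SimpleGraph.degree, ← Finset.card_filter_add_card_filter_not
      (p := fun w : Fin n => w.val < j)]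
  -- inner bound
  have hinner : ∀ v ∈ S, ((G.neighborFinset v).filter (fun w => w.val < j)).card ≤ j - 1 := by
    intro v hv
    have hsub : (G.neighborFinset v).filter (fun w => w.val < j) ⊆ S.erase v := by
      intro w hw
      rw [Finset.mem_filter] at hw
      rw [Finset.mem_erase]
      refine ⟨fun hwv => ?_, by simp [hS, hw.2]⟩
      exact (G.irrefl (hwv ▸ (SimpleGraph.mem_neighborFinset G v w).1 hw.1))
    calc _ ≤ (S.erase v).card := Finset.card_le_card hsub
    _ = j - 1 := by rw [Finset.card_erase_of_mem (by simpa [hS] using hv), hcardS]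
  -- double counting
  have hdc : ∑ v ∈ S, ((G.neighborFinset v).filter (fun w => ¬ w.val < j)).card
      = ∑ w ∈ univ.filter (fun w : Fin n => ¬ w.val < j),
          ((G.neighborFinset w).filter (fun v => v.val < j)).card := by
    have key : ∀ (v : Fin n) (p : Fin n → Prop) [DecidablePred p],
        ((G.neighborFinset v).filter p).card
          = ∑ w ∈ univ.filter p, (if G.Adj v w then 1 else 0) := by
      intro v p _
      rw [show (G.neighborFinset v).filter p = (univ.filter p).filter (fun w => G.Adj v w) by
        ext w; simp [SimpleGraph.mem_neighborFinset, and_comm]]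
      rw [Finset.card_filter]
    calc ∑ v ∈ S, ((G.neighborFinset v).filter (fun w => ¬ w.val < j)).card
        = ∑ v ∈ S, ∑ w ∈ univ.filter (fun w : Fin n => ¬ w.val < j),
            (if G.Adj v w then 1 else 0) := Finset.sum_congr rfl (fun v _ => key v _)
      _ = ∑ w ∈ univ.filter (fun w : Fin n => ¬ w.val < j), ∑ v ∈ S,
            (if G.Adj v w then 1 else 0) := Finset.sum_comm
      _ = ∑ w ∈ univ.filter (fun w : Fin n => ¬ w.val < j),
            ((G.neighborFinset w).filter (fun v => v.val < j)).card := by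
          refine Finset.sum_congr rfl (fun w _ => ?_)
          rw [key w (fun v => v.val < j)]
          refine Finset.sum_congr rfl (fun v _ => ?_)
          simp [SimpleGraph.adj_comm]
  -- outer bound
  have houter : ∀ w : Fin n, ((G.neighborFinset w).filter (fun v => v.val < j)).card
      ≤ min j (m w.val) := by
    intro w
    refine le_min ?_ ?_
    · calc _ ≤ S.card := Finset.card_le_card (fun v hv => by
        rw [Finset.mem_filter] at hv; simp [hS, hv.2])
      _ = j := hcardS
    · rw [← hG w]
      exact le_trans (Finset.card_le_card (Finset.filter_subset _ _)) (le_of_eq rfl)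
  -- assemble
  calc ∑ i ∈ range j, m i = ∑ v ∈ S, G.degree v := hLHS
    _ = ∑ v ∈ S, (((G.neighborFinset v).filter (fun w => w.val < j)).card +
          ((G.neighborFinset v).filter (fun w => ¬ w.val < j)).card) :=
        Finset.sum_congr rfl (fun v _ => hsplit v)
    _ = ∑ v ∈ S, ((G.neighborFinset v).filter (fun w => w.val < j)).card +
        ∑ v ∈ S, ((G.neighborFinset v).filter (fun w => ¬ w.val < j)).card :=
        Finset.sum_add_distrib
    _ ≤ j * (j-1) + ∑ i ∈ Ico j n, min j (m i) := by
        gcongr ?_ + ?_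
        · calc _ ≤ ∑ _v ∈ S, (j-1) := Finset.sum_le_sum hinner
            _ = j * (j-1) := by rw [Finset.sum_const, hcardS, smul_eq_mul]
        · rw [hdc, ← sum_fin_filter_ge (fun i => min j (m i))]
          exact Finset.sum_le_sum (fun w _ => houter w)

open Finset

private def extGraph {n : ℕ} (G' : SimpleGraph (Fin n)) (A : Finset ℕ) :
    SimpleGraph (Fin (n+1)) where
  Adj u v := (u.val = 0 ∧ v.val ≠ 0 ∧ v.val - 1 ∈ A) ∨ (v.val = 0 ∧ u.val ≠ 0 ∧ u.val - 1 ∈ A)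
    ∨ (u.val ≠ 0 ∧ v.val ≠ 0 ∧
        ∃ (ha : u.val - 1 < n) (hb : v.val - 1 < n), G'.Adj ⟨u.val-1, ha⟩ ⟨v.val-1, hb⟩)
  symm := by
    constructor
    rintro u v (⟨h1, h2, h3⟩ | ⟨h1, h2, h3⟩ | ⟨h1, h2, ha, hb, h3⟩)
    · exact Or.inr (Or.inl ⟨h1, h2, h3⟩)
    · exact Or.inl ⟨h1, h2, h3⟩
    · exact Or.inr (Or.inr ⟨h2, h1, hb, ha, h3.symm⟩)
  loopless := by
    constructor
    rintro u (⟨h1, h2, _⟩ | ⟨h1, h2, _⟩ | ⟨h1, h2, ha, hb, h3⟩)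
    · exact h2 h1
    · exact h2 h1
    · exact G'.irrefl h3

private lemma graphical_extend {n : ℕ} (d f : ℕ → ℕ) (A : Finset ℕ) (hA : A ⊆ range n)
    (hcard : A.card = d 0)
    (hef : ∀ i, i < n → d (i+1) = f i + (if i ∈ A then 1 else 0))
    (hG : Graphical n f) : Graphical (n+1) d := by
  obtain ⟨G', hG'⟩ := hG
  refine ⟨extGraph G' A, fun v => ?_⟩
  obtain ⟨vv, hv⟩ := v
  have hsucc_inj : Function.Injective (Fin.succ : Fin n → Fin (n+1)) := Fin.succ_injective n
  cases vv with
  | zero =>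
    have hset : (extGraph G' A).neighborSet ⟨0, hv⟩
        = Fin.succ '' {a : Fin n | a.val ∈ A} := by
      ext w
      simp only [SimpleGraph.neighborSet, extGraph, Set.mem_setOf_eq, Set.mem_image]
      constructor
      · rintro (⟨_, h2, h3⟩ | ⟨h1, h2, _⟩ | ⟨h1, _⟩)
        · have hwlt : w.val - 1 < n := by have := w.isLt; omega
          refine ⟨⟨w.val - 1, hwlt⟩, h3, ?_⟩
          apply Fin.ext; simp [Fin.val_succ]; omega
        · exact absurd rfl h2
        · exact absurd rfl h1
      · rintro ⟨a, ha, rfl⟩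
        left
        refine ⟨by trivial, ?_, ?_⟩
        · simp
        · simpa using ha
    rw [hset, Set.ncard_image_of_injective _ hsucc_inj]
    have himg : Fin.val '' {a : Fin n | a.val ∈ A} = (A : Set ℕ) := by
      ext x
      simp only [Set.mem_image, Set.mem_setOf_eq, Finset.coe_sort_coe, Finset.mem_coe]
      constructor
      · rintro ⟨a, ha, rfl⟩; exact ha
      · intro hx; exact ⟨⟨x, Finset.mem_range.1 (hA hx)⟩, hx, rfl⟩
    calc {a : Fin n | a.val ∈ A}.ncard
        = (Fin.val '' {a : Fin n | a.val ∈ A}).ncard :=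
          (Set.ncard_image_of_injective _ Fin.val_injective).symm
      _ = (↑A : Set ℕ).ncard := by rw [himg]
      _ = A.card := Set.ncard_coe_finset A
      _ = d 0 := hcard
  | succ i =>
    have hin : i < n := by omega
    have hset : (extGraph G' A).neighborSet ⟨i+1, hv⟩
        = (if i ∈ A then {(0 : Fin (n+1))} else ∅)
          ∪ Fin.succ '' (G'.neighborSet ⟨i, hin⟩) := by
      ext w
      simp only [SimpleGraph.neighborSet, extGraph, Set.mem_setOf_eq, Set.mem_union,
        Set.mem_image]
      constructor
      · rintro (⟨h1, _⟩ | ⟨h1, _, h3⟩ | ⟨_, h2, ha, hb, h3⟩)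
        · exact absurd h1 (by simp)
        · left
          have hw0 : w = (0 : Fin (n+1)) := Fin.ext (by simpa using h1)
          have : i ∈ A := by simpa using h3
          simp [this, hw0]
        · right
          have hwlt : w.val - 1 < n := hb
          refine ⟨⟨w.val - 1, hwlt⟩, by convert h3 using 2 <;> simp, ?_⟩
          apply Fin.ext; simp [Fin.val_succ]; omega
      · intro hw
        rcases hw with hw | ⟨a, ha, rfl⟩
        · by_cases hiA : i ∈ A
          · simp only [hiA, if_true, Set.mem_singleton_iff] at hw
            subst hw
            exact Or.inr (Or.inl ⟨rfl, by simp, by simpa using hiA⟩)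
          · simp [hiA] at hw
        · refine Or.inr (Or.inr ⟨by simp, by simp [Fin.val_succ], ?_, ?_, ?_⟩)
          · omega
          · simpa [Fin.val_succ] using a.isLt
          · convert ha using 2 <;> simp [Fin.val_succ]
    rw [hset]
    have hdisj : Disjoint (if i ∈ A then {(0 : Fin (n+1))} else ∅)
        (Fin.succ '' (G'.neighborSet ⟨i, hin⟩)) := by
      rw [Set.disjoint_left]
      intro x hx hx2
      obtain ⟨a, _, rfl⟩ := hx2
      by_cases hiA : i ∈ A <;> simp [hiA] at hx
    rw [Set.ncard_union_eq hdisj (Set.toFinite _) (Set.toFinite _),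
      Set.ncard_image_of_injective _ hsucc_inj, hG']
    rw [hef i hin]
    by_cases hiA : i ∈ A <;> simp [hiA, add_comm]

open Finset

-- downward closed subsets of range n are initial segments
private lemma downclosed_eq_range {n : ℕ} (S : Finset ℕ) (hS : S ⊆ range n)
    (hdc : ∀ i j : ℕ, i ≤ j → j ∈ S → i ∈ S) : S = range S.card := by
  ext i
  simp only [Finset.mem_range]
  constructor
  · intro hi
    have hsub : range (i+1) ⊆ S := fun x hx =>
      hdc x i (by simpa using Nat.lt_succ_iff.1 (Finset.mem_range.1 hx)) hi
    have := Finset.card_le_card hsub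
    simpa using this
  · intro hi
    by_contra hiS
    have hsub : S ⊆ range i := by
      intro x hx
      simp only [Finset.mem_range]
      by_contra hxi
      exact hiS (hdc i x (by omega) hx)
    have := Finset.card_le_card hsub
    simp only [Finset.card_range] at this
    omega

private lemma sum_shift (g : ℕ → ℕ) (a b : ℕ) :
    ∑ i ∈ Ico (a+1) (b+1), g i = ∑ i ∈ Ico a b, g (i+1) := by
  rw [Finset.sum_Ico_eq_sum_range, Finset.sum_Ico_eq_sum_range]
  have hb : b + 1 - (a + 1) = b - a := by omega
  rw [hb]
  exact Finset.sum_congr rfl (fun i _ => by rw [show a + 1 + i = a + i + 1 by omega])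

set_option maxHeartbeats 1000000 in
private lemma EG_reduce {n : ℕ} (d : ℕ → ℕ)
    (hsort : ∀ i j : ℕ, i ≤ j → j ≤ n → d j ≤ d i)
    (heven : Even (∑ i ∈ range (n+1), d i))
    (hEG : ErdosGallaiCond (n+1) d)
    (hk1 : 1 ≤ d 0) :
    ∃ (f : ℕ → ℕ) (A : Finset ℕ), A ⊆ range n ∧ A.card = d 0 ∧
      (∀ i, i < n → d (i+1) = f i + (if i ∈ A then 1 else 0)) ∧
      (∀ i j : ℕ, i ≤ j → j < n → f j ≤ f i) ∧
      Even (∑ i ∈ range n, f i) ∧ ErdosGallaiCond n f := by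
  classical
  set k := d 0 with hk
  set e : ℕ → ℕ := fun i => d (i+1) with he
  have hesort : ∀ i j : ℕ, i ≤ j → j < n → e j ≤ e i := by
    intro i j hij hj; exact hsort (i+1) (j+1) (by omega) (by omega)
  have hek : ∀ i, i < n → e i ≤ k := by
    intro i hi; exact hsort 0 (i+1) (by omega) (by omega)
  -- counting function
  set cnt : ℕ → ℕ := fun t => ((range n).filter (fun i => t ≤ e i)).card with hcnt
  have hcnt_char : ∀ t, ∀ i, i < n → (t ≤ e i ↔ i < cnt t) := by
    intro t i hi
    have hdc : ∀ i j : ℕ, i ≤ j → j ∈ (range n).filter (fun i => t ≤ e i) →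
        i ∈ (range n).filter (fun i => t ≤ e i) := by
      intro i j hij hj
      simp only [Finset.mem_filter, Finset.mem_range] at hj ⊢
      exact ⟨by omega, le_trans hj.2 (hesort i j hij hj.1)⟩
    have := downclosed_eq_range _ (Finset.filter_subset _ _) hdc
    constructor
    · intro hti
      have : i ∈ (range n).filter (fun i => t ≤ e i) := by
        simp only [Finset.mem_filter, Finset.mem_range]; exact ⟨hi, hti⟩
      rw [downclosed_eq_range _ (Finset.filter_subset _ _) hdc] at this
      simpa using this
    · intro hic
      have : i ∈ range (cnt t) := by simpa using hic
      rw [← downclosed_eq_range _ (Finset.filter_subset _ _) hdc] at this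
      simp only [Finset.mem_filter] at this
      exact this.2
  have hcnt_le : ∀ t, cnt t ≤ n := fun t =>
    le_trans (Finset.card_le_card (Finset.filter_subset _ _)) (by simp)
  -- EG instances in e-form
  have hEGe : ∀ J, 1 ≤ J → J ≤ n →
      k + ∑ i ∈ range (J-1), e i ≤ J*(J-1) + ∑ i ∈ Ico (J-1) n, min J (e i) := by
    intro J hJ1 hJn
    have := hEG J hJ1 (by omega)
    obtain ⟨m, rfl⟩ : ∃ m, J = m + 1 := ⟨J - 1, by omega⟩
    rw [Finset.sum_range_succ'] at this
    have hshift : ∑ i ∈ Ico (m+1) (n+1), min (m+1) (d i)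
        = ∑ i ∈ Ico m n, min (m+1) (e i) := sum_shift (fun i => min (m+1) (d i)) m n
    rw [hshift] at this
    simpa [add_comm] using this
  -- k ≤ cnt 1
  have hk_cnt : k ≤ cnt 1 := by
    have h1 := hEGe 1 le_rfl (by
      -- need 1 ≤ n : since k ≥ 1, EG at 1 forces something; handle n = 0 separately
      by_contra h
      have hn0 : n = 0 := by omega
      have := hEG 1 le_rfl (by omega)
      simp [hn0, Finset.sum_range_one] at this
      have : d 0 = 0 := by
        have h2 := this
        have : ∑ i ∈ Ico 1 1, min 1 (d i) = 0 := by simp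
        omega
      omega)
    simp only [Nat.sub_self, Finset.sum_range_zero, add_zero, mul_zero, one_mul, zero_add] at h1
    have hc1 : cnt 1 = ∑ i ∈ Ico 0 n, min 1 (e i) := by
      have h0 : cnt 1 = ((range n).filter (fun i => 1 ≤ e i)).card := rfl
      rw [h0, Finset.card_filter]
      rw [show Ico 0 n = range n by rw [Finset.range_eq_Ico]]
      exact Finset.sum_congr rfl (fun i _ => by by_cases h : 1 ≤ e i <;> simp [h] <;> omega)
    rw [hc1]
    simpa using h1
  
  have hkn : k ≤ n := le_trans hk_cnt (hcnt_le 1)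
  set c := e (k-1) with hc
  have hcge1 : 1 ≤ c := by
    rw [hc]; exact (hcnt_char 1 (k-1) (by omega)).2 (by omega)
  set a := cnt (c+1) with ha
  set B := cnt c with hB
  have ha_char : ∀ i, i < n → (c+1 ≤ e i ↔ i < a) := hcnt_char (c+1)
  have hB_char : ∀ i, i < n → (c ≤ e i ↔ i < B) := hcnt_char c
  have hBn : B ≤ n := hcnt_le c
  have hak : a < k := by
    by_contra h
    have := (ha_char (k-1) (by omega)).2 (by omega)
    omega
  have hkB : k ≤ B := by
    have := (hB_char (k-1) (by omega)).1 (le_of_eq hc.symm)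
    omega
  have hblock : ∀ i, a ≤ i → i < B → e i = c := by
    intro i hai hiB
    have h1 : c ≤ e i := (hB_char i (by omega)).2 hiB
    have h2 : ¬ (c+1 ≤ e i) := fun h => by have := (ha_char i (by omega)).1 h; omega
    omega
  have htail : ∀ i, B ≤ i → i < n → e i < c := by
    intro i hBi hin
    have := hB_char i hin
    omega
  set β := a + (B - k) with hβ
  have haβ : a ≤ β := by omega
  have hβB : β ≤ B := by omega
  set A : Finset ℕ := range a ∪ Ico β B with hA
  have hA_mem : ∀ i, (i ∈ A ↔ (i < a ∨ (β ≤ i ∧ i < B))) := by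
    intro i; simp [hA, Finset.mem_union, Finset.mem_range, Finset.mem_Ico]
  have hA_sub : A ⊆ range n := by
    intro i hi; rw [hA_mem] at hi; simp only [Finset.mem_range]; omega
  have hA_card : A.card = k := by
    rw [hA, Finset.card_union_of_disjoint]
    · simp only [Finset.card_range, Nat.card_Ico]; omega
    · rw [Finset.disjoint_left]
      intro i hi hi2
      simp only [Finset.mem_range] at hi
      simp only [Finset.mem_Ico] at hi2
      omega
  set f : ℕ → ℕ := fun i => e i - (if i ∈ A then 1 else 0) with hf
  have hAB : ∀ i, i ∈ A → i < B := by
    intro i hi; rw [hA_mem] at hi; omega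
  have he1A : ∀ i, i ∈ A → 1 ≤ e i := by
    intro i hi
    have hiB := hAB i hi
    have : c ≤ e i := (hB_char i (by omega)).2 hiB
    omega
  have hfe : ∀ i, i < n → e i = f i + (if i ∈ A then 1 else 0) := by
    intro i hin
    by_cases hiA : i ∈ A
    · have := he1A i hiA
      simp only [hf, hiA, if_true]
      omega
    · simp [hf, hiA]
  have hfle : ∀ i, f i ≤ e i := fun i => Nat.sub_le _ _
  have hfsort : ∀ i j : ℕ, i ≤ j → j < n → f j ≤ f i := by
    intro i j hij hjn
    by_cases hiA : i ∈ A
    · -- f i = e i - 1 : show f j ≤ e i - 1, i.e. if j ∈ A done else e j < e i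
      by_cases hjA : j ∈ A
      · simp only [hf, hiA, hjA, if_true]
        have := hesort i j hij hjn
        omega
      · -- j ∉ A, i ∈ A : show e j < e i
        have hij_lt : e j < e i := by
          rw [hA_mem] at hiA hjA
          rcases hiA with hia | ⟨hiβ, hiB⟩
          ·
            have hja : ¬ j < a := fun h => hjA (Or.inl h)
            have h1 : c + 1 ≤ e i := (ha_char i (by omega)).2 hia
            by_cases hjB : j < B
            · have := hblock j (by omega) hjB; omega
            · have := htail j (by omega) hjn; omega
          · -- i in [β, B): e i = c; j ∉ A, j ≥ i ≥ β so j ≥ B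
            have hei : e i = c := hblock i (by omega) hiB
            have hjB : ¬ j < B := fun h => hjA (Or.inr ⟨by omega, h⟩)
            have := htail j (by omega) hjn
            omega
        simp only [hf, if_pos hiA, if_neg hjA]
        omega
    · -- i ∉ A : f i = e i
      simp only [hf, if_neg hiA]
      calc f j ≤ e j := hfle j
        _ ≤ e i := hesort i j hij hjn
  -- the decrement-count function
  set dlt : ℕ → ℕ := fun j => ∑ i ∈ range j, (if i ∈ A then 1 else 0) with hdlt
  have hdlt_val : ∀ j, dlt j = min a j + (min B j - min β j) := by
    intro j
    induction j with
    | zero => simp [hdlt]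
    | succ j ih =>
      have hstep : dlt (j+1) = dlt j + (if j ∈ A then 1 else 0) := Finset.sum_range_succ _ j
      rw [hstep, ih]
      by_cases hjA : j ∈ A
      · rw [hA_mem] at hjA
        rw [if_pos ((hA_mem j).2 hjA)]
        rcases hjA with h | h <;> omega
      · rw [if_neg hjA]
        rw [hA_mem] at hjA
        push_neg at hjA
        omega
  have hEf : ∀ j, j ≤ n → ∑ i ∈ range j, e i = ∑ i ∈ range j, f i + dlt j := by
    intro j hjn
    rw [hdlt, ← Finset.sum_add_distrib]
    exact Finset.sum_congr rfl (fun i hi => hfe i (by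
      simp only [Finset.mem_range] at hi; omega))
  have hsum_d : ∑ i ∈ range (n+1), d i = k + ∑ i ∈ range n, e i := by
    rw [Finset.sum_range_succ']
    have h2 : ∑ i ∈ range n, e i = ∑ i ∈ range n, d (i+1) :=
      Finset.sum_congr rfl (fun i _ => rfl)
    omega
  have hdlt_n : dlt n = k := by
    rw [hdlt_val n]
    omega
  have heven_f : Even (∑ i ∈ range n, f i) := by
    obtain ⟨r, hr⟩ := heven
    have h1 := hEf n le_rfl
    rw [hdlt_n] at h1
    exact ⟨r - k, by omega⟩
  have hEGf : ErdosGallaiCond n f := by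
    intro jj hjj1 hjjn
    induction jj with
    | zero => omega
    | succ j IH =>
      simp only [Nat.add_sub_cancel]
      by_cases hhard : j + 1 ≤ f j
      · -- hard case
        have hejk : e j ≤ k := hek j (by omega)
        have hfej : f j ≤ e j := hfle j
        have hjk : j + 1 ≤ k := by omega
        have hjn : j < n := by omega
        have hfA : ∀ i, i < n → i ∈ A → (c ≤ e i ∧ f i + 1 = e i) := by
          intro i hin hiA
          have h1 : c ≤ e i := (hB_char i hin).2 (hAB i hiA)
          have h2 := hfe i hin
          rw [if_pos hiA] at h2
          exact ⟨h1, by omega⟩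
        have hfnA : ∀ i, i ∉ A → f i = e i := by
          intro i hiA; simp [hf, hiA]
        have hEfj := hEf (j+1) (by omega)
        have hEj : ∑ i ∈ range (j+1), e i = ∑ i ∈ range j, e i + e j :=
          Finset.sum_range_succ e j
        by_cases hcaseA : j + 1 ≤ a
        · -- Case A
          have hdltj : dlt (j+1) = j + 1 := by rw [hdlt_val]; omega
          rw [hdltj] at hEfj
          by_cases hA1 : j + 2 ≤ c
          · -- A1 : use hEGe (j+1)
            have hEG1 := hEGe (j+1) (by omega) (by omega)
            simp only [Nat.add_sub_cancel] at hEG1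
            rw [Finset.sum_eq_sum_Ico_succ_bot (show j < n by omega)] at hEG1
            have heje : j + 1 ≤ e j := by omega
            have hminej : min (j+1) (e j) = j+1 := by omega
            rw [hminej] at hEG1
            have hteq : ∑ i ∈ Ico (j+1) n, min (j+1) (e i)
                = ∑ i ∈ Ico (j+1) n, min (j+1) (f i) := by
              refine Finset.sum_congr rfl (fun i hi => ?_)
              simp only [Finset.mem_Ico] at hi
              by_cases hiA : i ∈ A
              · obtain ⟨h1, h2⟩ := hfA i hi.2 hiA
                omega
              · rw [hfnA i hiA]
            rw [hteq] at hEG1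
            omega
          · -- A2 : use hEGe (j+2)
            have hj2n : j + 2 ≤ n := by omega
            have hEG1 := hEGe (j+2) (by omega) hj2n
            rw [show j + 2 - 1 = j + 1 by omega] at hEG1
            have hprod : (j+2)*(j+1) = (j+1)*j + 2*(j+1) := by ring
            -- pointwise bound with indicators
            have hpoint : ∀ i ∈ Ico (j+1) n, min (j+2) (e i) ≤ min (j+1) (f i)
                + ((if i < a then 1 else 0) + (if β ≤ i ∧ i < B then 1 else 0)) := by
              intro i hi
              simp only [Finset.mem_Ico] at hi
              by_cases hiA : i ∈ A
              · obtain ⟨h1, h2⟩ := hfA i hi.2 hiA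
                have := (hA_mem i).1 hiA
                rcases this with h | h
                · rw [if_pos h]; omega
                · rw [if_pos h]; omega
              · rw [hfnA i hiA]
                have hmem := (hA_mem i)
                have hia : ¬ i < a := fun h => hiA (hmem.2 (Or.inl h))
                have heic : e i ≤ c := by
                  by_cases hiB : i < B
                  · have := hblock i (by omega) hiB; omega
                  · have := htail i (by omega) hi.2; omega
                omega
            have hsum_point : ∑ i ∈ Ico (j+1) n, min (j+2) (e i)
                ≤ ∑ i ∈ Ico (j+1) n, min (j+1) (f i) + ((a - (j+1)) + (k - a)) := by
              calc ∑ i ∈ Ico (j+1) n, min (j+2) (e i)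
                  ≤ ∑ i ∈ Ico (j+1) n, (min (j+1) (f i)
                    + ((if i < a then 1 else 0) + (if β ≤ i ∧ i < B then 1 else 0))) :=
                    Finset.sum_le_sum hpoint
                _ = ∑ i ∈ Ico (j+1) n, min (j+1) (f i)
                    + (∑ i ∈ Ico (j+1) n, (if i < a then 1 else 0)
                      + ∑ i ∈ Ico (j+1) n, (if β ≤ i ∧ i < B then 1 else 0)) := by
                    rw [← Finset.sum_add_distrib, ← Finset.sum_add_distrib]
                _ = ∑ i ∈ Ico (j+1) n, min (j+1) (f i) + ((a - (j+1)) + (k - a)) := by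
                    congr 1
                    have h1 : ∑ i ∈ Ico (j+1) n, (if i < a then 1 else 0) = a - (j+1) := by
                      rw [← Finset.card_filter]
                      rw [show (Ico (j+1) n).filter (fun i => i < a) = Ico (j+1) a by
                        ext i; simp only [Finset.mem_filter, Finset.mem_Ico]; omega]
                      rw [Nat.card_Ico]
                    have h2 : ∑ i ∈ Ico (j+1) n, (if β ≤ i ∧ i < B then 1 else 0) = k - a := by
                      rw [← Finset.card_filter]
                      rw [show (Ico (j+1) n).filter (fun i => β ≤ i ∧ i < B) = Ico β B by
                        ext i; simp only [Finset.mem_filter, Finset.mem_Ico]; omega]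
                      rw [Nat.card_Ico]
                      omega
                    rw [h1, h2]
            omega
        · -- Case B : a ≤ j
          have hjB : j < B := by omega
          have hejc : e j = c := hblock j (by omega) hjB
          have hcj1 : j + 1 ≤ c := by omega
          have haj : a ≤ j := by omega
          have hfge : ∀ i, i < n → e i ≤ f i + 1 := by
            intro i hin
            by_cases hiA : i ∈ A
            · exact le_of_eq ((hfA i hin hiA).2).symm
            · rw [hfnA i hiA]; omega
          by_cases hB1 : j + 2 ≤ c
          · -- B1 : direct counting
            have hsplitT : ∑ i ∈ Ico (j+1) B, min (j+1) (f i)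
                + ∑ i ∈ Ico B n, min (j+1) (f i)
                = ∑ i ∈ Ico (j+1) n, min (j+1) (f i) :=
              Finset.sum_Ico_consecutive _ (by omega) hBn
            have hblockT : ∑ i ∈ Ico (j+1) B, min (j+1) (f i) = (B - (j+1)) * (j+1) := by
              have hpt : ∀ i ∈ Ico (j+1) B, min (j+1) (f i) = j+1 := by
                intro i hi
                simp only [Finset.mem_Ico] at hi
                have h1 : c ≤ e i := (hB_char i (by omega)).2 hi.2
                have h2 := hfge i (by omega)
                omega
              rw [Finset.sum_congr rfl hpt, Finset.sum_const, Nat.card_Ico, smul_eq_mul]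
            have hEk : ∑ i ∈ range (j+1), e i ≤ (j+1) * k := by
              calc ∑ i ∈ range (j+1), e i ≤ ∑ _i ∈ range (j+1), k :=
                    Finset.sum_le_sum (fun i hi => hek i (by
                      simp only [Finset.mem_range] at hi; omega))
                _ = (j+1) * k := by rw [Finset.sum_const, Finset.card_range, smul_eq_mul]
            have hdltj := hdlt_val (j+1)
            rcases Nat.lt_or_ge k B with hkBlt | hkBge
            · have hmul : (j+1) * k ≤ (j+1)*j + (B - (j+1)) * (j+1) := by
                have heq : (j+1)*j + (B - (j+1))*(j+1) = (j+1)*(B-1) := by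
                  zify [show j+1 ≤ B by omega, show 1 ≤ B by omega]
                  ring
                rw [heq]
                exact Nat.mul_le_mul_left _ (by omega)
              omega
            · have hkB' : k = B := by omega
              have hmul : (j+1)*k = (j+1)*j + (B - (j+1))*(j+1) + (j+1) := by
                rw [hkB']
                zify [show j+1 ≤ B by omega]
                ring
              omega
          · -- B2 : boss case, c = j+1
            have hceq : c = j + 1 := by omega
            simp only [← hceq]
            -- now goal : ∑ i ∈ range c, f i ≤ c * j + ∑ i ∈ Ico c n, min c (f i)
            have hacn : a ≤ c := by omega
            have hcB : c ≤ B := by omega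
            have hEc : ∑ i ∈ range c, e i = ∑ i ∈ range a, e i + (c - a) * c := by
              have h1 : ∑ i ∈ Ico 0 a, e i + ∑ i ∈ Ico a c, e i = ∑ i ∈ Ico 0 c, e i :=
                Finset.sum_Ico_consecutive e (Nat.zero_le a) hacn
              have h2 : ∑ i ∈ Ico a c, e i = (c - a) * c := by
                have hpt : ∀ i ∈ Ico a c, e i = c := by
                  intro i hi
                  simp only [Finset.mem_Ico] at hi
                  exact hblock i hi.1 (by omega)
                rw [Finset.sum_congr rfl hpt, Finset.sum_const, Nat.card_Ico, smul_eq_mul]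
              rw [Finset.range_eq_Ico, ← h1, h2, Finset.range_eq_Ico]
            have hT : ∑ i ∈ Ico c n, min c (f i)
                = (∑ i ∈ Ico c B, f i) + ∑ i ∈ Ico B n, e i := by
              rw [← Finset.sum_Ico_consecutive _ hcB hBn]
              congr 1
              · refine Finset.sum_congr rfl (fun i hi => ?_)
                simp only [Finset.mem_Ico] at hi
                have h1 : e i = c := hblock i (by omega) hi.2
                have h2 : f i ≤ e i := hfle i
                omega
              · refine Finset.sum_congr rfl (fun i hi => ?_)
                simp only [Finset.mem_Ico] at hi
                have h1 : e i < c := htail i hi.1 hi.2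
                have h2 : f i = e i := hfnA i (fun hiA => by have := hAB i hiA; omega)
                omega
            have hEfc := hEf c (by omega)
            have hEfB := hEf B (by omega)
            have hdltB : dlt B = k := by rw [hdlt_val]; omega
            have hsplit_eB : ∑ i ∈ range c, e i + ∑ i ∈ Ico c B, e i = ∑ i ∈ range B, e i := by
              rw [Finset.range_eq_Ico, Finset.range_eq_Ico]
              exact Finset.sum_Ico_consecutive e (Nat.zero_le c) hcB
            have hsplit_fB : ∑ i ∈ range c, f i + ∑ i ∈ Ico c B, f i = ∑ i ∈ range B, f i := by
              rw [Finset.range_eq_Ico, Finset.range_eq_Ico]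
              exact Finset.sum_Ico_consecutive f (Nat.zero_le c) hcB
            have hIcoe : ∑ i ∈ Ico c B, e i = (B - c) * c := by
              have hpt : ∀ i ∈ Ico c B, e i = c := by
                intro i hi
                simp only [Finset.mem_Ico] at hi
                exact hblock i (by omega) hi.2
              rw [Finset.sum_congr rfl hpt, Finset.sum_const, Nat.card_Ico, smul_eq_mul]
            have hdltc := hdlt_val c
            -- key combination : ∑_{Ico c B} f + k = (B-c)*c + dlt c
            have hFcB : ∑ i ∈ Ico c B, f i + k = (B - c) * c + dlt c := by omega
            rcases Nat.lt_or_ge 1 c with hc2 | hc1'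
            · -- c ≥ 2 : algebraic case
              have hSa : ∑ i ∈ range a, e i ≤ a * k := by
                calc ∑ i ∈ range a, e i ≤ ∑ _i ∈ range a, k :=
                      Finset.sum_le_sum (fun i hi => hek i (by
                        simp only [Finset.mem_range] at hi; omega))
                  _ = a * k := by rw [Finset.sum_const, Finset.card_range, smul_eq_mul]
              have hSaZ : (0:ℤ) ≤ (a:ℤ) * k - ∑ i ∈ range a, (e i : ℤ) := by
                have h' : (∑ i ∈ range a, (e i : ℤ)) ≤ (a:ℤ) * k := by exact_mod_cast hSa
                exact sub_nonneg.2 h'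
              have hWZ : (0:ℤ) ≤ ∑ i ∈ Ico B n, (e i : ℤ) :=
                Finset.sum_nonneg (fun i _ => by positivity)
              have key : ∑ i ∈ range a, e i + k + (c - a) * c
                  ≤ c * j + (B - c) * c + 2 * dlt c + ∑ i ∈ Ico B n, e i := by
                rcases Nat.lt_or_ge β c with hβc | hcβ
                · -- β < c : dlt c = c + k - B
                  have hd : dlt c = c + k - B := by rw [hdltc]; omega
                  rw [hd]
                  have hBck : B ≤ c + k := by omega
                  zify [hacn, hcB, hBck]
                  have hj' : (j : ℤ) = (c : ℤ) - 1 := by omega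
                  rw [hj', ← sub_nonneg]
                  have t1 : (0:ℤ) ≤ ((k:ℤ)-c)*((c:ℤ)-a-1) :=
                    mul_nonneg (by omega) (by omega)
                  have t2 : (0:ℤ) ≤ ((c:ℤ)-2)*((B:ℤ)-k) :=
                    mul_nonneg (by omega) (by omega)
                  calc (0:ℤ) ≤ ((k:ℤ)-c)*((c:ℤ)-a-1) + ((c:ℤ)-2)*((B:ℤ)-k)
                        + ((a:ℤ)*k - ∑ i ∈ range a, (e i : ℤ))
                        + ∑ i ∈ Ico B n, (e i : ℤ) :=
                        add_nonneg (add_nonneg (add_nonneg t1 t2) hSaZ) hWZ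
                    _ = _ := by push_cast; ring
                · -- c ≤ β : dlt c = a
                  have hd : dlt c = a := by rw [hdltc]; omega
                  rw [hd]
                  have hBcka : c + k ≤ B + a := by omega
                  zify [hacn, hcB]
                  have hj' : (j : ℤ) = (c : ℤ) - 1 := by omega
                  rw [hj', ← sub_nonneg]
                  have t1 : (0:ℤ) ≤ ((k:ℤ)-c)*((c:ℤ)-a-1) :=
                    mul_nonneg (by omega) (by omega)
                  have t2 : (0:ℤ) ≤ ((c:ℤ)-2)*((c:ℤ)-a) :=
                    mul_nonneg (by omega) (by omega)
                  have t3 : (0:ℤ) ≤ (c:ℤ)*((B:ℤ)-c-k+a) :=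
                    mul_nonneg (by omega) (by omega)
                  calc (0:ℤ) ≤ (c:ℤ)*((B:ℤ)-c-k+a) + ((k:ℤ)-c)*((c:ℤ)-a-1)
                        + ((c:ℤ)-2)*((c:ℤ)-a)
                        + ((a:ℤ)*k - ∑ i ∈ range a, (e i : ℤ))
                        + ∑ i ∈ Ico B n, (e i : ℤ) :=
                        add_nonneg (add_nonneg (add_nonneg (add_nonneg t3 t1) t2) hSaZ) hWZ
                    _ = _ := by push_cast; ring
              omega
            · -- c = 1 : parity case
              have hc1'' : c = 1 := by omega
              have hj0 : j = 0 := by omega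
              subst hj0
              have ha0 : a = 0 := by omega
              -- 0 ∉ A since f 0 = c = 1
              have h0A : (0:ℕ) ∉ A := by
                intro h0
                have := (hfA 0 (by omega) h0).2
                have he0 : e 0 = c := hblock 0 (by omega) (by omega)
                omega
              have hβ1 : 1 ≤ β := by
                by_contra hβ0
                exact h0A ((hA_mem 0).2 (Or.inr ⟨by omega, by omega⟩))
              have hW : ∑ i ∈ Ico B n, e i = 0 := by
                refine Finset.sum_eq_zero (fun i hi => ?_)
                simp only [Finset.mem_Ico] at hi
                have := htail i hi.1 hi.2
                omega
              have hrBe : ∑ i ∈ range B, e i = B * 1 := by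
                have hpt : ∀ i ∈ range B, e i = 1 := by
                  intro i hi
                  simp only [Finset.mem_range] at hi
                  have := hblock i (by omega) hi
                  omega
                rw [Finset.sum_congr rfl hpt, Finset.sum_const, Finset.card_range, smul_eq_mul]
              have hne : ∑ i ∈ range n, e i = ∑ i ∈ range B, e i + ∑ i ∈ Ico B n, e i := by
                rw [Finset.range_eq_Ico, Finset.range_eq_Ico]
                exact (Finset.sum_Ico_consecutive e (Nat.zero_le B) hBn).symm
              obtain ⟨r, hr⟩ := heven
              have hdlt1 : dlt c = 0 := by rw [hdltc]; omega
              have hm1 : (B - c) * c = B - c := by rw [hc1'', mul_one]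
              have hm2 : (c - a) * c = c - a := by rw [hc1'', mul_one]
              have hm3 : c * 0 = 0 := mul_zero c
              omega
      · -- easy case : f j ≤ j, propagate
        rcases Nat.eq_zero_or_pos j with rfl | hj1
        · have hf0 : f 0 = 0 := by omega
          simp [Finset.sum_range_one, hf0]
        · have hIH := IH (by omega) (by omega)
          rw [Finset.sum_range_succ]
          rw [Finset.sum_eq_sum_Ico_succ_bot (show j < n by omega)] at hIH
          have hmono : ∑ i ∈ Ico (j+1) n, min j (f i) ≤ ∑ i ∈ Ico (j+1) n, min (j+1) (f i) :=
            Finset.sum_le_sum (fun i _ => by omega)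
          have hjj : (j+1)*j = j*(j-1) + 2*j := by
            cases j with
            | zero => simp
            | succ m => simp only [Nat.add_sub_cancel]; ring
          omega
  exact ⟨f, A, hA_sub, hA_card, (fun i hin => hfe i hin), hfsort, heven_f, hEGf⟩

open Finset

private lemma sufficiency : ∀ (n : ℕ) (d : ℕ → ℕ),
    (∀ i j : ℕ, i ≤ j → j < n → d j ≤ d i) → Even (∑ i ∈ range n, d i) →
    ErdosGallaiCond n d → Graphical n d := by
  intro n
  induction n with
  | zero =>
    intro d _ _ _
    exact ⟨⊥, fun v => v.elim0⟩
  | succ n IH =>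
    intro d hsort heven hEG
    by_cases h0 : d 0 = 0
    · refine ⟨⊥, fun v => ?_⟩
      have hv : d v.val = 0 := by
        have := hsort 0 v.val (Nat.zero_le _) v.isLt
        omega
      simp [SimpleGraph.neighborSet, hv]
    · obtain ⟨f, A, hA, hcard, hef, hfsort, hfe, hfEG⟩ :=
        EG_reduce d (fun i j hij hj => hsort i j hij (by omega)) heven hEG (by omega)
      exact graphical_extend d f A hA hcard hef (IH f hfsort hfe hfEG)

/-- Erdős–Gallai theorem: a sequence of positive integers is graphical iff its total sum is
even and its decreasing rearrangement satisfies the Erdős–Gallai condition. -/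
theorem erdos_gallai (n : ℕ) (hn : 1 ≤ n) (d m : ℕ → ℕ)
    (hpos : ∀ i, i < n → 1 ≤ d i)
    (hrearr : ∃ σ : Equiv.Perm (Fin n), ∀ i : Fin n, m (i : ℕ) = d ((σ i : Fin n) : ℕ))
    (hanti : ∀ a b, a ≤ b → b < n → m b ≤ m a) :
    Graphical n d ↔ Even (∑ i ∈ Finset.range n, d i) ∧ ErdosGallaiCond n m := by
  obtain ⟨σ, hσ⟩ := hrearr
  have hsum_eq : ∑ i ∈ range n, m i = ∑ i ∈ range n, d i := by
    rw [← Fin.sum_univ_eq_sum_range m n, ← Fin.sum_univ_eq_sum_range d n]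
    calc ∑ i : Fin n, m i.val
        = ∑ i : Fin n, d ((σ i : Fin n) : ℕ) := Finset.sum_congr rfl (fun i _ => hσ i)
      _ = ∑ i : Fin n, d i.val := Equiv.sum_comp σ (fun i : Fin n => d i.val)
  constructor
  · intro h
    have hm : Graphical n m := graphical_of_perm d m σ hσ h
    obtain ⟨he, hc⟩ := necessity m hm
    rw [hsum_eq] at he
    exact ⟨he, hc⟩
  · rintro ⟨heven, hEG⟩
    have hm : Graphical n m := sufficiency n m (fun a b hab hb => hanti a b hab hb)
      (by rw [hsum_eq]; exact heven) hEG
    refine graphical_of_perm m d σ⁻¹ (fun i => ?_) hm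
    have h1 := hσ (σ⁻¹ i)
    rw [h1, ← (Equiv.Perm.inv_eq_iff_eq (f := σ) (x := i)).1 rfl]
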